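/- Let X and M' be nonempty finite sets, let O be a stochastic kernel from X to M' (the observation/channel kernel) and T a stochastic kernel from X to X (the source transition kernel), with Dobrushin coefficients δ(O) and δ(T). For a probability vector ρ on X write Tρ for the probability vector (Tρ)(x') := Σ_{x∈X} T(x'|x)ρ(x), write N_ρ(m') := Σ_{x∈X} O(m'|x)ρ(x), and when N_ρ(m') > 0 let ρ̄_{m'}(x) := O(m'|x)ρ(x)/N_ρ(m') be the Bayes posterior. Let μ, ν be probability vectors on X such that μ(x) > 0 implies ν(x) > 0 for all x. Then the one-step predictor updates satisfy Σ_{m'∈M' : N_μ(m')>0} N_μ(m') · ‖T(μ̄_{m'}) − T(ν̄_{m'})‖_TV ≤ (1 − δ(T))·(2 − δ(O)) · ‖μ − ν‖_TV. (This is the one-step contraction of the paper's Theorem 3, stated in explicit finite-sum form: the expected total variation between next-step predictors started from two priors, with the observation drawn from the μ-predictive distribution, contracts by the factor (1 − δ(T))(2 − δ(O)).) -/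

import Mathlib

open Finset

lemma abs_eq_max_add_max (t : ℝ) : |t| = max t 0 + max (-t) 0 := by
  rcases le_total 0 t with h | h
  · rw [abs_of_nonneg h, max_eq_left h, max_eq_right (neg_nonpos.mpr h), add_zero]
  · rw [abs_of_nonpos h, max_eq_right h, max_eq_left (neg_nonneg.mpr h), zero_add]

lemma dobrushin_contraction {A B : Type*} [Fintype A] [Fintype B] [Nonempty A]
    (K : A → B → ℝ) (hK_nonneg : ∀ a b, 0 ≤ K a b) (hK_sum : ∀ a, ∑ b, K a b = 1)
    (f : A → ℝ) (hf : ∑ a, f a = 0) :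
    ∑ b, |∑ a, K a b * f a| ≤
      (1 - Finset.univ.inf' Finset.univ_nonempty
        (fun p : A × A => ∑ b, min (K p.1 b) (K p.2 b))) * ∑ a, |f a| := by
  set δ := Finset.univ.inf' Finset.univ_nonempty
      (fun p : A × A => ∑ b, min (K p.1 b) (K p.2 b)) with hδ
  have hδle : ∀ p : A × A, δ ≤ ∑ b, min (K p.1 b) (K p.2 b) := fun p =>
    Finset.inf'_le _ (Finset.mem_univ p)
  set fp : A → ℝ := fun a => max (f a) 0 with hfp
  set fm : A → ℝ := fun a => max (-f a) 0 with hfm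
  have hfp_nonneg : ∀ a, 0 ≤ fp a := fun a => le_max_right _ _
  have hfm_nonneg : ∀ a, 0 ≤ fm a := fun a => le_max_right _ _
  have hsub : ∀ a, fp a - fm a = f a := fun a => max_zero_sub_max_neg_zero_eq_self (f a)
  have hs_eq : (∑ a, fp a) = ∑ a, fm a := by
    have h0 : ∑ a, (fp a - fm a) = 0 := by simp only [hsub]; exact hf
    rw [Finset.sum_sub_distrib] at h0; linarith
  set s := ∑ a, fp a with hs
  have habsf : ∑ a, |f a| = 2 * s := by
    have h1 : ∀ a, |f a| = fp a + fm a := fun a => abs_eq_max_add_max (f a)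
    simp only [h1]
    rw [Finset.sum_add_distrib, ← hs_eq]; ring
  have hs_nonneg : 0 ≤ s := Finset.sum_nonneg (fun a _ => hfp_nonneg a)
  rcases eq_or_lt_of_le hs_nonneg with hs0 | hs_pos
  · have hf0 : ∀ a, f a = 0 := by
      intro a
      have h1 : fp a = 0 :=
        (Finset.sum_eq_zero_iff_of_nonneg (fun a _ => hfp_nonneg a)).mp hs0.symm a
          (Finset.mem_univ a)
      have h2 : fm a = 0 :=
        (Finset.sum_eq_zero_iff_of_nonneg (fun a _ => hfm_nonneg a)).mp
          (hs_eq ▸ hs0.symm) a (Finset.mem_univ a)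
      rw [← hsub a, h1, h2, sub_zero]
    simp [hf0]
  · have key : ∀ b, ∑ a, K a b * f a
        = (∑ a, ∑ a', fp a * fm a' * (K a b - K a' b)) / s := by
      intro b
      have e1 : ∑ a, ∑ a', fp a * fm a' * K a b
          = (∑ a, fp a * K a b) * (∑ a', fm a') := by
        rw [Finset.sum_mul_sum]
        exact Finset.sum_congr rfl fun a _ => Finset.sum_congr rfl fun a' _ => by ring
      have e2 : ∑ a, ∑ a', fp a * fm a' * K a' b
          = (∑ a, fp a) * (∑ a', fm a' * K a' b) := by
        rw [Finset.sum_mul_sum]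
        exact Finset.sum_congr rfl fun a _ => Finset.sum_congr rfl fun a' _ => by ring
      have e3 : ∑ a, ∑ a', fp a * fm a' * (K a b - K a' b)
          = (∑ a, fp a * K a b) * s - s * (∑ a', fm a' * K a' b) := by
        simp only [mul_sub, Finset.sum_sub_distrib]
        rw [e1, e2, ← hs_eq]
      have e4 : (∑ a, K a b * f a) * s
          = (∑ a, fp a * K a b) * s - s * (∑ a', fm a' * K a' b) := by
        have e5 : ∑ a, K a b * f a = (∑ a, fp a * K a b) - ∑ a, fm a * K a b := by
          rw [← Finset.sum_sub_distrib]
          exact Finset.sum_congr rfl fun a _ => by rw [← hsub a]; ring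
        rw [e5]; ring
      rw [e3, ← e4, mul_div_cancel_right₀ _ (ne_of_gt hs_pos)]
    have pair_bound : ∀ a a' : A, ∑ b, |K a b - K a' b| ≤ 2 * (1 - δ) := by
      intro a a'
      have h1 : ∀ b, |K a b - K a' b| = K a b + K a' b - 2 * min (K a b) (K a' b) := by
        intro b
        rcases le_total (K a b) (K a' b) with h | h
        · rw [abs_of_nonpos (by linarith), min_eq_left h]; ring
        · rw [abs_of_nonneg (by linarith), min_eq_right h]; ring
      simp only [h1]
      rw [Finset.sum_sub_distrib, Finset.sum_add_distrib, hK_sum, hK_sum, ← Finset.mul_sum]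
      have := hδle (a, a')
      simp only at this
      linarith
    calc ∑ b, |∑ a, K a b * f a|
        = ∑ b, |∑ a, ∑ a', fp a * fm a' * (K a b - K a' b)| / s := by
          simp only [key, abs_div, abs_of_pos hs_pos]
      _ ≤ ∑ b, (∑ a, ∑ a', fp a * fm a' * |K a b - K a' b|) / s := by
          apply Finset.sum_le_sum; intro b _
          gcongr
          calc |∑ a, ∑ a', fp a * fm a' * (K a b - K a' b)|
              ≤ ∑ a, |∑ a', fp a * fm a' * (K a b - K a' b)| :=
                Finset.abs_sum_le_sum_abs _ _
            _ ≤ ∑ a, ∑ a', fp a * fm a' * |K a b - K a' b| := by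
                apply Finset.sum_le_sum; intro a _
                calc |∑ a', fp a * fm a' * (K a b - K a' b)|
                    ≤ ∑ a', |fp a * fm a' * (K a b - K a' b)| :=
                      Finset.abs_sum_le_sum_abs _ _
                  _ = ∑ a', fp a * fm a' * |K a b - K a' b| := by
                      apply Finset.sum_congr rfl; intro a' _
                      rw [abs_mul, abs_of_nonneg
                        (mul_nonneg (hfp_nonneg a) (hfm_nonneg a'))]
      _ = (∑ a, ∑ a', fp a * fm a' * ∑ b, |K a b - K a' b|) / s := by
          rw [← Finset.sum_div]
          congr 1
          rw [Finset.sum_comm]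
          apply Finset.sum_congr rfl; intro a _
          rw [Finset.sum_comm]
          apply Finset.sum_congr rfl; intro a' _
          rw [Finset.mul_sum]
      _ ≤ (∑ a, ∑ a', fp a * fm a' * (2 * (1 - δ))) / s := by
          gcongr with a _ a' _
          exact pair_bound a a'
      _ = (1 - δ) * ∑ a, |f a| := by
          simp only [← Finset.sum_mul, ← Finset.mul_sum]
          rw [← hs_eq, habsf]
          field_simp
          ring

/-- one-step contraction of the paper's Theorem 3: the expected
total variation between the next-step predictors `T(μ̄_{m'})` and `T(ν̄_{m'})`,
with the observation `m'` drawn from the μ-predictive distribution, contracts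
by the factor `(1 − δ(T))·(2 − δ(O))`.  Here `T(x'|x)` is written `T x x'` and
`O(m'|x)` is written `O x m'`. -/
theorem predictor_one_step_contraction
    {X M' : Type*} [Fintype X] [Fintype M'] [Nonempty X] [Nonempty M']
    (O : X → M' → ℝ) (hO_nonneg : ∀ x m', 0 ≤ O x m')
    (hO_sum : ∀ x, ∑ m', O x m' = 1)
    (T : X → X → ℝ) (hT_nonneg : ∀ x x', 0 ≤ T x x')
    (hT_sum : ∀ x, ∑ x', T x x' = 1)
    (μ ν : X → ℝ)
    (hμ_nonneg : ∀ x, 0 ≤ μ x) (hμ_sum : ∑ x, μ x = 1)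
    (hν_nonneg : ∀ x, 0 ≤ ν x) (hν_sum : ∑ x, ν x = 1)
    (habs : ∀ x, 0 < μ x → 0 < ν x) :
    ∑ m' ∈ Finset.univ.filter (fun m' : M' => 0 < ∑ x, O x m' * μ x),
        (∑ x, O x m' * μ x) *
          (∑ x', |(∑ x, T x x' * (O x m' * μ x / (∑ y, O y m' * μ y)))
                   - (∑ x, T x x' * (O x m' * ν x / (∑ y, O y m' * ν y)))|)
      ≤ (1 - Finset.univ.inf' Finset.univ_nonempty
            (fun p : X × X => ∑ x', min (T p.1 x') (T p.2 x'))) *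
        (2 - Finset.univ.inf' Finset.univ_nonempty
            (fun p : X × X => ∑ m', min (O p.1 m') (O p.2 m'))) *
          ∑ x, |μ x - ν x| := by
  classical
  set δT := Finset.univ.inf' Finset.univ_nonempty
      (fun p : X × X => ∑ x', min (T p.1 x') (T p.2 x')) with hδT
  set δO := Finset.univ.inf' Finset.univ_nonempty
      (fun p : X × X => ∑ m', min (O p.1 m') (O p.2 m')) with hδO
  obtain ⟨x0⟩ := ‹Nonempty X›
  have hδT1 : δT ≤ 1 := by
    rw [hδT]
    refine le_trans (Finset.inf'_le _ (Finset.mem_univ ((x0, x0) : X × X))) ?_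
    simp [hT_sum x0]
  have hδO1 : δO ≤ 1 := by
    rw [hδO]
    refine le_trans (Finset.inf'_le _ (Finset.mem_univ ((x0, x0) : X × X))) ?_
    simp [hO_sum x0]
  have h1T : (0:ℝ) ≤ 1 - δT := by linarith
  -- per-observation bound
  have step1 : ∀ m' ∈ Finset.univ.filter (fun m' : M' => 0 < ∑ x, O x m' * μ x),
      (∑ x, O x m' * μ x) *
          (∑ x', |(∑ x, T x x' * (O x m' * μ x / (∑ y, O y m' * μ y)))
                   - (∑ x, T x x' * (O x m' * ν x / (∑ y, O y m' * ν y)))|)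
      ≤ (1 - δT) * ((∑ x, O x m' * |μ x - ν x|)
          + |(∑ x, O x m' * ν x) - (∑ x, O x m' * μ x)|) := by
    intro m' hm'
    have hNμ : 0 < ∑ x, O x m' * μ x := (Finset.mem_filter.mp hm').2
    have hNν : 0 < ∑ x, O x m' * ν x := by
      by_contra h
      push_neg at h
      have hz : ∑ x, O x m' * ν x = 0 := le_antisymm h
        (Finset.sum_nonneg fun x _ => mul_nonneg (hO_nonneg x m') (hν_nonneg x))
      have hall := (Finset.sum_eq_zero_iff_of_nonneg
        (fun x _ => mul_nonneg (hO_nonneg x m') (hν_nonneg x))).mp hz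
      have h0 : ∑ x, O x m' * μ x = 0 := by
        apply Finset.sum_eq_zero
        intro x _
        rcases (hμ_nonneg x).lt_or_eq with hx | hx
        · have hνx := habs x hx
          have hOx : O x m' = 0 := by
            by_contra hO
            have hpos : 0 < O x m' * ν x :=
              mul_pos ((hO_nonneg x m').lt_of_ne (Ne.symm hO)) hνx
            have := hall x (Finset.mem_univ x)
            linarith
          rw [hOx, zero_mul]
        · rw [← hx, mul_zero]
      linarith
    set Nμ := ∑ x, O x m' * μ x with hNμdef
    set Nν := ∑ x, O x m' * ν x with hNνdef
    set f : X → ℝ := fun x => O x m' * μ x / Nμ - O x m' * ν x / Nν with hfdef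
    have hfsum : ∑ x, f x = 0 := by
      simp only [hfdef]
      rw [Finset.sum_sub_distrib, ← Finset.sum_div, ← Finset.sum_div,
        ← hNμdef, ← hNνdef, div_self (ne_of_gt hNμ), div_self (ne_of_gt hNν), sub_self]
    have h1 := dobrushin_contraction T hT_nonneg hT_sum f hfsum
    rw [← hδT] at h1
    have hrw : ∀ x', (∑ x, T x x' * (O x m' * μ x / Nμ))
        - (∑ x, T x x' * (O x m' * ν x / Nν)) = ∑ x, T x x' * f x := by
      intro x'
      rw [← Finset.sum_sub_distrib]
      exact Finset.sum_congr rfl fun x _ => by simp only [hfdef]; ring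
    calc Nμ * (∑ x', |(∑ x, T x x' * (O x m' * μ x / Nμ))
            - (∑ x, T x x' * (O x m' * ν x / Nν))|)
        = Nμ * ∑ x', |∑ x, T x x' * f x| := by
          congr 1
          exact Finset.sum_congr rfl fun x' _ => by rw [hrw x']
      _ ≤ Nμ * ((1 - δT) * ∑ x, |f x|) := by
          exact mul_le_mul_of_nonneg_left h1 hNμ.le
      _ = (1 - δT) * ∑ x, Nμ * |f x| := by
          rw [← mul_assoc, mul_comm Nμ (1 - δT), mul_assoc, Finset.mul_sum]
      _ ≤ (1 - δT) * ((∑ x, O x m' * |μ x - ν x|) + |Nν - Nμ|) := by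
          apply mul_le_mul_of_nonneg_left _ h1T
          have hpt : ∀ x, Nμ * |f x|
              ≤ O x m' * |μ x - ν x| + |1 - Nμ / Nν| * (O x m' * ν x) := by
            intro x
            have hNμf : Nμ * f x = O x m' * (μ x - ν x)
                + (1 - Nμ / Nν) * (O x m' * ν x) := by
              simp only [hfdef]
              field_simp
              ring
            calc Nμ * |f x| = |Nμ * f x| := by
                  rw [abs_mul, abs_of_pos hNμ]
              _ = |O x m' * (μ x - ν x) + (1 - Nμ / Nν) * (O x m' * ν x)| := by
                  rw [hNμf]
              _ ≤ |O x m' * (μ x - ν x)| + |(1 - Nμ / Nν) * (O x m' * ν x)| :=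
                  abs_add_le _ _
              _ = O x m' * |μ x - ν x| + |1 - Nμ / Nν| * (O x m' * ν x) := by
                  rw [abs_mul, abs_mul, abs_of_nonneg (hO_nonneg x m'),
                    abs_of_nonneg (mul_nonneg (hO_nonneg x m') (hν_nonneg x))]
          calc ∑ x, Nμ * |f x|
              ≤ ∑ x, (O x m' * |μ x - ν x| + |1 - Nμ / Nν| * (O x m' * ν x)) :=
                Finset.sum_le_sum fun x _ => hpt x
            _ = (∑ x, O x m' * |μ x - ν x|) + |1 - Nμ / Nν| * Nν := by
                rw [Finset.sum_add_distrib, ← Finset.mul_sum, ← hNνdef]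
            _ = (∑ x, O x m' * |μ x - ν x|) + |Nν - Nμ| := by
                congr 1
                calc |1 - Nμ / Nν| * Nν = |(1 - Nμ / Nν) * Nν| := by
                      rw [abs_mul, abs_of_pos hNν]
                  _ = |Nν - Nμ| := by
                      congr 1
                      field_simp
    -- note : goal uses (∑ y, ...) which is defeq to Nμ/Nν
  -- sum the per-observation bound
  have step2 : ∑ m' ∈ Finset.univ.filter (fun m' : M' => 0 < ∑ x, O x m' * μ x),
        (∑ x, O x m' * μ x) *
          (∑ x', |(∑ x, T x x' * (O x m' * μ x / (∑ y, O y m' * μ y)))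
                   - (∑ x, T x x' * (O x m' * ν x / (∑ y, O y m' * ν y)))|)
      ≤ ∑ m' : M', (1 - δT) * ((∑ x, O x m' * |μ x - ν x|)
          + |(∑ x, O x m' * ν x) - (∑ x, O x m' * μ x)|) := by
    refine le_trans (Finset.sum_le_sum step1) ?_
    apply Finset.sum_le_sum_of_subset_of_nonneg (Finset.filter_subset _ _)
    intro m' _ _
    apply mul_nonneg h1T
    apply add_nonneg (Finset.sum_nonneg fun x _ =>
      mul_nonneg (hO_nonneg x m') (abs_nonneg _)) (abs_nonneg _)
  have hOob := dobrushin_contraction O hO_nonneg hO_sum (fun x => ν x - μ x)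
    (by rw [Finset.sum_sub_distrib, hν_sum, hμ_sum, sub_self])
  rw [← hδO] at hOob
  have hOob' : ∑ m' : M', |(∑ x, O x m' * ν x) - (∑ x, O x m' * μ x)|
      ≤ (1 - δO) * ∑ x, |μ x - ν x| := by
    calc ∑ m' : M', |(∑ x, O x m' * ν x) - (∑ x, O x m' * μ x)|
        = ∑ m' : M', |∑ x, O x m' * (ν x - μ x)| := by
          apply Finset.sum_congr rfl; intro m' _
          rw [← Finset.sum_sub_distrib]
          congr 1
          exact Finset.sum_congr rfl fun x _ => by ring
      _ ≤ (1 - δO) * ∑ x, |ν x - μ x| := hOob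
      _ = (1 - δO) * ∑ x, |μ x - ν x| := by
          congr 1
          exact Finset.sum_congr rfl fun x _ => abs_sub_comm _ _
  have hswap : ∑ m' : M', ∑ x, O x m' * |μ x - ν x| = ∑ x, |μ x - ν x| := by
    rw [Finset.sum_comm]
    apply Finset.sum_congr rfl; intro x _
    rw [← Finset.sum_mul, hO_sum x, one_mul]
  calc ∑ m' ∈ Finset.univ.filter (fun m' : M' => 0 < ∑ x, O x m' * μ x),
        (∑ x, O x m' * μ x) *
          (∑ x', |(∑ x, T x x' * (O x m' * μ x / (∑ y, O y m' * μ y)))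
                   - (∑ x, T x x' * (O x m' * ν x / (∑ y, O y m' * ν y)))|)
      ≤ ∑ m' : M', (1 - δT) * ((∑ x, O x m' * |μ x - ν x|)
          + |(∑ x, O x m' * ν x) - (∑ x, O x m' * μ x)|) := step2
    _ = (1 - δT) * ((∑ m' : M', ∑ x, O x m' * |μ x - ν x|)
          + ∑ m' : M', |(∑ x, O x m' * ν x) - (∑ x, O x m' * μ x)|) := by
        rw [← Finset.mul_sum, Finset.sum_add_distrib]
    _ ≤ (1 - δT) * ((∑ x, |μ x - ν x|) + (1 - δO) * ∑ x, |μ x - ν x|) := by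
        apply mul_le_mul_of_nonneg_left _ h1T
        rw [hswap]
        exact add_le_add_right hOob' _
    _ = (1 - δT) * (2 - δO) * ∑ x, |μ x - ν x| := by ring
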